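/- Let P, Q, R, S ∈ B_A(H). Then ω_𝔸([[P,Q],[R,S]]) ≤ √(2ω_A²(P) + (1/2)(‖P^{♯_A}Q‖_A + ‖Q‖_A²)) + √(2ω_A²(S) + (1/2)(‖S^{♯_A}R‖_A + ‖R‖_A²)). -/

import Mathlib

open ContinuousLinearMap

/-- The `A`-seminorm of a vector: `‖x‖_A = √⟨Ax, x⟩`. -/
noncomputable def vnormA {H : Type*} [NormedAddCommGroup H] [InnerProductSpace ℂ H]
    (A : H →L[ℂ] H) (x : H) : ℝ :=
  Real.sqrt (RCLike.re (inner ℂ (A x) x : ℂ))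

/-- `T` is `A`-bounded, i.e. `T ∈ B_{A^{1/2}}(H)`. -/
def ABounded {H : Type*} [NormedAddCommGroup H] [InnerProductSpace ℂ H]
    (A T : H →L[ℂ] H) : Prop :=
  ∃ c : ℝ, 0 < c ∧ ∀ x, vnormA A (T x) ≤ c * vnormA A x

/-- The `A`-operator seminorm `‖T‖_A = sup{‖Tx‖_A : ‖x‖_A = 1}`. -/
noncomputable def opNormA {H : Type*} [NormedAddCommGroup H] [InnerProductSpace ℂ H]
    (A T : H →L[ℂ] H) : ℝ :=
  sSup {c : ℝ | ∃ x : H, vnormA A x = 1 ∧ c = vnormA A (T x)}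

/-- The `A`-numerical radius `ω_A(T) = sup{|⟨ATx, x⟩| : ‖x‖_A = 1}`. -/
noncomputable def wA {H : Type*} [NormedAddCommGroup H] [InnerProductSpace ℂ H]
    (A T : H →L[ℂ] H) : ℝ :=
  sSup {c : ℝ | ∃ x : H, vnormA A x = 1 ∧ c = ‖(inner ℂ (A (T x)) x : ℂ)‖}

/-- `Ts` is the reduced (Douglas) solution of `AX = T*A`, i.e. `Ts = T^{♯_A}`. -/
def IsReducedAdjoint {H : Type*} [NormedAddCommGroup H] [InnerProductSpace ℂ H]
    [CompleteSpace H] (A T Ts : H →L[ℂ] H) : Prop :=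
  A ∘L Ts = (ContinuousLinearMap.adjoint T) ∘L A ∧
    ∀ y, Ts y ∈ closure (Set.range A)

/-- The `2 × 2` operator matrix `[[P, Q], [R, S]]` acting on `H ⊕ H` (with the `ℓ²` product
inner product). -/
noncomputable def blk {H : Type*} [NormedAddCommGroup H] [InnerProductSpace ℂ H]
    (P Q R S : H →L[ℂ] H) : WithLp 2 (H × H) →L[ℂ] WithLp 2 (H × H) :=
  letI e := (WithLp.prodContinuousLinearEquiv 2 ℂ H H)
  (e.symm.toContinuousLinearMap) ∘L
    ((P.comp (fst ℂ H H) + Q.comp (snd ℂ H H)).prod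
      (R.comp (fst ℂ H H) + S.comp (snd ℂ H H))) ∘L
    (e.toContinuousLinearMap)

/-- `𝔸 = diag(A, A)` on `H ⊕ H`. -/
noncomputable def AA {H : Type*} [NormedAddCommGroup H] [InnerProductSpace ℂ H]
    (A : H →L[ℂ] H) : WithLp 2 (H × H) →L[ℂ] WithLp 2 (H × H) :=
  blk A 0 0 A

set_option linter.unusedSectionVars false
set_option linter.unusedVariables false

section Aux
variable {H : Type*} [NormedAddCommGroup H] [InnerProductSpace ℂ H] [CompleteSpace H]
variable {A : H →L[ℂ] H}

lemma vnormA_nonneg (A : H →L[ℂ] H) (x : H) : 0 ≤ vnormA A x := Real.sqrt_nonneg _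

lemma vnormA_sq (hA : A.IsPositive) (x : H) :
    vnormA A x ^ 2 = RCLike.re (inner ℂ (A x) x : ℂ) :=
  Real.sq_sqrt (hA.2 x)

lemma innA_conj (hA : A.IsPositive) (x y : H) :
    (starRingEnd ℂ) (inner ℂ (A y) x : ℂ) = (inner ℂ (A x) y : ℂ) := by
  rw [inner_conj_symm, ← adjoint_inner_left, hA.isSelfAdjoint.adjoint_eq]

lemma csA (hA : A.IsPositive) (x y : H) :
    ‖(inner ℂ (A x) y : ℂ)‖ ≤ vnormA A x * vnormA A y := by
  letI core : PreInnerProductSpace.Core ℂ H :=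
  { inner := fun u v => inner ℂ (A u) v
    conj_inner_symm := fun u v => by
      simp only [starRingEnd_apply]
      rw [← starRingEnd_apply, inner_conj_symm, ← adjoint_inner_left,
        hA.isSelfAdjoint.adjoint_eq]
    re_inner_nonneg := fun u => hA.2 u
    add_left := fun u v w => by simp [inner_add_left]
    smul_left := fun u v r => by simp [inner_smul_left, mul_comm] }
  have h : ‖(inner ℂ (A x) y : ℂ)‖ * ‖(inner ℂ (A y) x : ℂ)‖
      ≤ RCLike.re (inner ℂ (A x) x : ℂ) * RCLike.re (inner ℂ (A y) y : ℂ) :=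
    @InnerProductSpace.Core.inner_mul_inner_self_le ℂ H _ _ _ core x y
  have hsymm : ‖(inner ℂ (A y) x : ℂ)‖ = ‖(inner ℂ (A x) y : ℂ)‖ := by
    rw [← innA_conj hA x y, RCLike.norm_conj]
  rw [hsymm, ← vnormA_sq hA, ← vnormA_sq hA] at h
  have h2 : ‖(inner ℂ (A x) y : ℂ)‖ ^ 2 ≤ (vnormA A x * vnormA A y) ^ 2 := by
    rw [mul_pow]; nlinarith [h]
  calc ‖(inner ℂ (A x) y : ℂ)‖ = Real.sqrt (‖(inner ℂ (A x) y : ℂ)‖ ^ 2) := by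
        rw [Real.sqrt_sq (norm_nonneg _)]
    _ ≤ Real.sqrt ((vnormA A x * vnormA A y) ^ 2) := Real.sqrt_le_sqrt h2
    _ = vnormA A x * vnormA A y :=
        Real.sqrt_sq (mul_nonneg (vnormA_nonneg A x) (vnormA_nonneg A y))

end Aux

section Reid
variable {H : Type*} [NormedAddCommGroup H] [InnerProductSpace ℂ H] [CompleteSpace H]
variable {A B : H →L[ℂ] H}

lemma reid (hA : A.IsPositive) (hsa : IsSelfAdjoint (A * B)) (x : H) :
    RCLike.re (inner ℂ (A (B x)) x : ℂ) ≤ ‖B‖ * RCLike.re (inner ℂ (A x) x : ℂ) := by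
  set v : ℝ := RCLike.re (inner ℂ (A x) x : ℂ) with hv
  have hv0 : 0 ≤ v := hA.2 x
  have hsaD : ∀ n : ℕ, IsSelfAdjoint (A * B ^ (2 ^ n)) := by
    intro n
    induction n with
    | zero => simpa using hsa
    | succ n ih =>
      set D := B ^ (2 ^ n) with hD
      have hpow : B ^ (2 ^ (n + 1)) = D * D := by
        rw [hD, ← pow_add]
        congr 1
        have : 2 ^ (n + 1) = 2 * 2 ^ n := by ring
        omega
      have hstar : star D * A = A * D := by
        calc star D * A = star D * star A := by rw [hA.isSelfAdjoint.star_eq]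
          _ = star (A * D) := (star_mul A D).symm
          _ = A * D := ih
      show star (A * B ^ (2 ^ (n + 1))) = A * B ^ (2 ^ (n + 1))
      rw [hpow, ← mul_assoc, star_mul, ih.star_eq, ← mul_assoc, hstar, mul_assoc]
  set a : ℕ → ℝ := fun n => RCLike.re (inner ℂ (A ((B ^ (2 ^ n)) x)) x : ℂ) with ha
  have hstep : ∀ n, (a n) ^ 2 ≤ a (n + 1) * v := by
    intro n
    set D := B ^ (2 ^ n) with hD
    have hpow : B ^ (2 ^ (n + 1)) = D * D := by
      rw [hD, ← pow_add]
      congr 1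
      have : 2 ^ (n + 1) = 2 * 2 ^ n := by ring
      omega
    have habs : ‖(inner ℂ (A (D x)) x : ℂ)‖ ≤ vnormA A (D x) * vnormA A x :=
      csA hA (D x) x
    have h1 : |a n| ≤ ‖(inner ℂ (A (D x)) x : ℂ)‖ := by
      exact Complex.abs_re_le_norm (inner ℂ (A (D x)) x : ℂ)
    have h2 : |a n| ≤ vnormA A (D x) * vnormA A x := h1.trans habs
    have hre : (a n) ^ 2 ≤ (vnormA A (D x)) ^ 2 * (vnormA A x) ^ 2 := by
      calc (a n)^2 = |a n|^2 := (sq_abs _).symm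
        _ ≤ (vnormA A (D x) * vnormA A x)^2 := pow_le_pow_left₀ (abs_nonneg _) h2 2
        _ = _ := mul_pow _ _ _
    have hnext : (vnormA A (D x)) ^ 2 = a (n + 1) := by
      rw [vnormA_sq hA]
      have h4 : A (D x) = (A * D) x := rfl
      have h5 : ContinuousLinearMap.adjoint (A * D) = A * D := (hsaD n).adjoint_eq
      have h3 : (inner ℂ (A (D x)) (D x) : ℂ) = inner ℂ x (A ((B ^ (2 ^ (n+1))) x)) := by
        rw [h4, ← h5, adjoint_inner_left]
        congr 1
        rw [hpow]
        rfl
      rw [h3, inner_re_symm]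
    rw [hnext, vnormA_sq hA, ← hv] at hre
    exact hre
  have hpowb : ∀ n, (a 0) ^ (2 ^ (n+1)) ≤ a (n+1) * v ^ (2 ^ (n+1) - 1) := by
    intro n
    induction n with
    | zero => simpa using hstep 0
    | succ n ih =>
      have hk : (1:ℕ) ≤ 2 ^ (n+1) := Nat.one_le_two_pow
      have hk2 : 2 ^ (n+2) = 2 * 2 ^ (n+1) := by ring
      have heven : 0 ≤ (a 0) ^ (2 ^ (n+1)) := by
        have h9 : 2 ^ (n+1) = 2 ^ n + 2 ^ n := by ring
        have : Even (2 ^ (n+1)) := ⟨2 ^ n, h9⟩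
        exact this.pow_nonneg _
      have hsq : ((a 0) ^ (2 ^ (n+1)))^2 ≤ (a (n+1) * v ^ (2 ^ (n+1) - 1))^2 :=
        pow_le_pow_left₀ heven ih 2
      have e1 : ((a 0) ^ (2 ^ (n+1)))^2 = (a 0) ^ (2 ^ (n+2)) := by
        rw [← pow_mul, ← pow_succ]
      have e2 : (a (n+1) * v ^ (2 ^ (n+1) - 1))^2 = (a (n+1))^2 * v ^ (2 ^ (n+2) - 2) := by
        rw [mul_pow, ← pow_mul]
        congr 2
        omega
      have e3 : v * v ^ (2 ^ (n+2) - 2) = v ^ (2 ^ (n+2) - 1) := by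
        rw [← pow_succ']
        congr 1
        omega
      calc (a 0) ^ (2 ^ (n+2)) = ((a 0) ^ (2 ^ (n+1)))^2 := e1.symm
        _ ≤ (a (n+1))^2 * v ^ (2 ^ (n+2) - 2) := by rw [← e2]; exact hsq
        _ ≤ (a (n+2) * v) * v ^ (2 ^ (n+2) - 2) :=
            mul_le_mul_of_nonneg_right (hstep (n+1)) (pow_nonneg hv0 _)
        _ = a (n+2) * v ^ (2 ^ (n+2) - 1) := by rw [mul_assoc, e3]
  have habound : ∀ n, a (n+1) ≤ (‖A‖ * ‖x‖^2) * ‖B‖ ^ (2 ^ (n+1)) := by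
    intro n
    have h1 : a (n+1) ≤ ‖(inner ℂ (A ((B ^ (2 ^ (n+1))) x)) x : ℂ)‖ := by
      exact RCLike.re_le_norm (inner ℂ (A ((B ^ (2 ^ (n+1))) x)) x : ℂ)
    have h2 : ‖(inner ℂ (A ((B ^ (2 ^ (n+1))) x)) x : ℂ)‖ ≤ ‖A ((B ^ (2 ^ (n+1))) x)‖ * ‖x‖ :=
      norm_inner_le_norm _ _
    have h3 : ‖A ((B ^ (2 ^ (n+1))) x)‖ ≤ ‖A‖ * (‖B‖^(2 ^ (n+1)) * ‖x‖) := by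
      calc ‖A ((B ^ (2 ^ (n+1))) x)‖ ≤ ‖A‖ * ‖(B ^ (2 ^ (n+1))) x‖ := A.le_opNorm _
        _ ≤ ‖A‖ * (‖B ^ (2 ^ (n+1))‖ * ‖x‖) :=
            mul_le_mul_of_nonneg_left ((B ^ (2 ^ (n+1))).le_opNorm x) (norm_nonneg A)
        _ ≤ ‖A‖ * (‖B‖^(2 ^ (n+1)) * ‖x‖) := by
            gcongr
            exact norm_pow_le' B (by positivity)
    nlinarith [norm_nonneg x, norm_nonneg (A ((B ^ (2 ^ (n+1))) x))]
  by_contra hcon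
  push_neg at hcon
  have ha0 : 0 < a 0 := lt_of_le_of_lt (mul_nonneg (norm_nonneg B) hv0) hcon
  rcases eq_or_lt_of_le hv0 with hveq | hvpos
  · have h := hstep 0
    rw [← hveq] at h
    nlinarith
  rcases eq_or_lt_of_le (norm_nonneg B) with hBeq | hBpos
  · have hB0 : B = 0 := by rwa [eq_comm, norm_eq_zero] at hBeq
    have : a 0 = 0 := by simp [ha, hB0]
    nlinarith
  set c := ‖B‖ * v with hc
  have hcpos : 0 < c := mul_pos hBpos hvpos
  have hr : 1 < a 0 / c := (one_lt_div hcpos).2 hcon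
  obtain ⟨N, hN⟩ := pow_unbounded_of_one_lt ((‖A‖ * ‖x‖^2) / v) hr
  have key : ∀ n : ℕ, (a 0 / c) ^ (2 ^ (n+1)) ≤ (‖A‖ * ‖x‖^2) / v := by
    intro n
    have hm : (1:ℕ) ≤ 2 ^ (n+1) := Nat.one_le_two_pow
    have h1 := (hpowb n).trans
      (mul_le_mul_of_nonneg_right (habound n) (pow_nonneg hv0 _))
    have e4 : v ^ (2 ^ (n+1) - 1) * v = v ^ (2 ^ (n+1)) := by
      rw [← pow_succ]
      congr 1
      omega
    have h2 : (a 0) ^ (2 ^ (n+1)) * v ≤ (‖A‖ * ‖x‖^2) * c ^ (2 ^ (n+1)) := by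
      calc (a 0) ^ (2 ^ (n+1)) * v
          ≤ ((‖A‖ * ‖x‖^2) * ‖B‖ ^ (2 ^ (n+1)) * v ^ (2 ^ (n+1) - 1)) * v :=
            mul_le_mul_of_nonneg_right h1 hv0
        _ = (‖A‖ * ‖x‖^2) * (‖B‖ ^ (2 ^ (n+1)) * v ^ (2 ^ (n+1))) := by
            rw [mul_assoc, mul_assoc, e4]
        _ = (‖A‖ * ‖x‖^2) * c ^ (2 ^ (n+1)) := by rw [hc, mul_pow]
    rw [div_pow, div_le_div_iff₀ (pow_pos hcpos _) hvpos]
    exact h2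
  have hmono : (a 0 / c) ^ N ≤ (a 0 / c) ^ (2 ^ (N+1)) := by
    apply pow_le_pow_right₀ hr.le
    calc N ≤ 2 ^ N := (Nat.lt_two_pow_self (n := N)).le
      _ ≤ 2 ^ (N+1) := Nat.pow_le_pow_right (by norm_num) (by omega)
  linarith [hmono.trans (key N)]

end Reid

section Bounds
variable {H : Type*} [NormedAddCommGroup H] [InnerProductSpace ℂ H] [CompleteSpace H]
variable {A : H →L[ℂ] H}

lemma vnormA_smul_real (A : H →L[ℂ] H) (c : ℝ) (x : H) :
    vnormA A (((c:ℂ)) • x) = |c| * vnormA A x := by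
  have h : (inner ℂ (A ((c:ℂ) • x)) ((c:ℂ) • x) : ℂ) = ((c^2 : ℝ) : ℂ) * inner ℂ (A x) x := by
    rw [map_smul, inner_smul_left, inner_smul_right, Complex.conj_ofReal]
    push_cast
    ring
  unfold vnormA
  rw [h]
  have h2 : RCLike.re (((c^2 : ℝ) : ℂ) * inner ℂ (A x) x) = c^2 * RCLike.re (inner ℂ (A x) x : ℂ) := by
    simp [Complex.mul_re, ← Complex.ofReal_pow]
  rw [h2, Real.sqrt_mul (sq_nonneg c), Real.sqrt_sq_eq_abs]

lemma reducedAdjoint_mul (hA : A.IsPositive) {T Ts : H →L[ℂ] H}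
    (hT : IsReducedAdjoint A T Ts) :
    A * (Ts * T) = (ContinuousLinearMap.adjoint T * A) * T := by
  have h1 : A * Ts = ContinuousLinearMap.adjoint T * A := hT.1
  rw [← mul_assoc, h1]

lemma adj_selfadj (hA : A.IsPositive) {T Ts : H →L[ℂ] H}
    (hT : IsReducedAdjoint A T Ts) : IsSelfAdjoint (A * (Ts * T)) := by
  rw [IsSelfAdjoint, reducedAdjoint_mul hA hT]
  calc star ((ContinuousLinearMap.adjoint T * A) * T)
      = star T * (star A * star (ContinuousLinearMap.adjoint T)) := by
        rw [star_mul, star_mul]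
    _ = (ContinuousLinearMap.adjoint T * A) * T := by
        simp [ContinuousLinearMap.star_eq_adjoint, adjoint_adjoint,
          hA.isSelfAdjoint.adjoint_eq, mul_assoc]

lemma boundA (hA : A.IsPositive) {T Ts : H →L[ℂ] H} (hT : IsReducedAdjoint A T Ts) (x : H) :
    vnormA A (T x) ≤ Real.sqrt ‖Ts ∘L T‖ * vnormA A x := by
  have hre := reid hA (adj_selfadj hA hT) x
  have h3 : (inner ℂ (A (T x)) (T x) : ℂ) = inner ℂ (A ((Ts * T) x)) x := by
    have h2 : A ((Ts * T) x) = ContinuousLinearMap.adjoint T (A (T x)) := by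
      have := congrArg (fun f : H →L[ℂ] H => f x) (reducedAdjoint_mul hA hT)
      simpa [ContinuousLinearMap.mul_apply] using this
    rw [h2, adjoint_inner_left]
  have hTx : vnormA A (T x) ^ 2 ≤ ‖Ts * T‖ * vnormA A x ^ 2 := by
    rw [vnormA_sq hA, vnormA_sq hA, h3]
    exact hre
  have h4 := Real.sqrt_le_sqrt hTx
  rw [Real.sqrt_sq (vnormA_nonneg A (T x)), Real.sqrt_mul (norm_nonneg _),
    Real.sqrt_sq (vnormA_nonneg A x)] at h4
  exact h4

lemma opNormA_nonneg (A T : H →L[ℂ] H) : 0 ≤ opNormA A T :=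
  Real.sSup_nonneg (by rintro c ⟨x, -, rfl⟩; exact vnormA_nonneg A _)

lemma wA_nonneg (A T : H →L[ℂ] H) : 0 ≤ wA A T :=
  Real.sSup_nonneg (by rintro c ⟨x, -, rfl⟩; exact (norm_nonneg _))

lemma opA_le (hA : A.IsPositive) {T Ts : H →L[ℂ] H} (hT : IsReducedAdjoint A T Ts) (x : H) :
    vnormA A (T x) ≤ opNormA A T * vnormA A x := by
  have hbdd : BddAbove {c : ℝ | ∃ x : H, vnormA A x = 1 ∧ c = vnormA A (T x)} := by
    refine ⟨Real.sqrt ‖Ts ∘L T‖, ?_⟩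
    rintro c ⟨y, hy, rfl⟩
    have h := boundA hA hT y
    rwa [hy, mul_one] at h
  rcases eq_or_lt_of_le (vnormA_nonneg A x) with h0 | hpos
  · have hb := boundA hA hT x
    rw [← h0, mul_zero] at hb
    have hz : vnormA A (T x) = 0 := le_antisymm hb (vnormA_nonneg A _)
    rw [hz, ← h0, mul_zero]
  · set t := vnormA A x with ht
    have hu1 : vnormA A (((t⁻¹ : ℝ) : ℂ) • x) = 1 := by
      rw [vnormA_smul_real, abs_of_pos (inv_pos.2 hpos), ← ht, inv_mul_cancel₀ hpos.ne']
    have hle := le_csSup hbdd ⟨_, hu1, rfl⟩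
    rw [map_smul, vnormA_smul_real, abs_of_pos (inv_pos.2 hpos)] at hle
    calc vnormA A (T x) = t * (t⁻¹ * vnormA A (T x)) := by field_simp
      _ ≤ t * opNormA A T := mul_le_mul_of_nonneg_left hle hpos.le
      _ = opNormA A T * t := mul_comm _ _

lemma wAA_le (hA : A.IsPositive) {T Ts : H →L[ℂ] H} (hT : IsReducedAdjoint A T Ts) (x : H) :
    ‖(inner ℂ (A (T x)) x : ℂ)‖ ≤ wA A T * vnormA A x ^ 2 := by
  have hbdd : BddAbove
      {c : ℝ | ∃ x : H, vnormA A x = 1 ∧ c = ‖(inner ℂ (A (T x)) x : ℂ)‖} := by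
    refine ⟨Real.sqrt ‖Ts ∘L T‖, ?_⟩
    rintro c ⟨y, hy, rfl⟩
    have h1 := csA hA (T y) y
    have h2 := boundA hA hT y
    rw [hy, mul_one] at h1 h2
    exact h1.trans h2
  rcases eq_or_lt_of_le (vnormA_nonneg A x) with h0 | hpos
  · have h1 := csA hA (T x) x
    rw [← h0, mul_zero] at h1
    have := le_antisymm h1 (norm_nonneg _)
    rw [this, ← h0]
    simp
  · set t := vnormA A x with ht
    have hu1 : vnormA A (((t⁻¹ : ℝ) : ℂ) • x) = 1 := by
      rw [vnormA_smul_real, abs_of_pos (inv_pos.2 hpos), ← ht, inv_mul_cancel₀ hpos.ne']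
    have hval : (inner ℂ (A (T (((t⁻¹ : ℝ) : ℂ) • x))) (((t⁻¹ : ℝ) : ℂ) • x) : ℂ)
        = (((t⁻¹)^2 : ℝ) : ℂ) * inner ℂ (A (T x)) x := by
      rw [map_smul, map_smul, inner_smul_left, inner_smul_right, Complex.conj_ofReal]
      push_cast
      ring
    have hle := le_csSup hbdd ⟨_, hu1, rfl⟩
    rw [hval, norm_mul, Complex.norm_real, Real.norm_eq_abs, abs_of_pos (by positivity : (0:ℝ) < (t⁻¹)^2)] at hle
    calc ‖(inner ℂ (A (T x)) x : ℂ)‖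
        = t^2 * ((t⁻¹)^2 * ‖(inner ℂ (A (T x)) x : ℂ)‖) := by field_simp
      _ ≤ t^2 * wA A T := mul_le_mul_of_nonneg_left hle (by positivity)
      _ = wA A T * t^2 := mul_comm _ _

end Bounds

section Prod
variable {H : Type*} [NormedAddCommGroup H] [InnerProductSpace ℂ H]

lemma blk_fst (P Q R S : H →L[ℂ] H) (v : WithLp 2 (H × H)) :
    (blk P Q R S v).ofLp.1 = P v.ofLp.1 + Q v.ofLp.2 := rfl

lemma blk_snd (P Q R S : H →L[ℂ] H) (v : WithLp 2 (H × H)) :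
    (blk P Q R S v).ofLp.2 = R v.ofLp.1 + S v.ofLp.2 := rfl

lemma inner_AA_apply (A : H →L[ℂ] H) (w v : WithLp 2 (H × H)) :
    (inner ℂ (AA A w) v : ℂ) = inner ℂ (A w.ofLp.1) v.ofLp.1 + inner ℂ (A w.ofLp.2) v.ofLp.2 := by
  rw [WithLp.prod_inner_apply]
  have h1 : (AA A w).ofLp.1 = A w.ofLp.1 := by
    show A w.ofLp.1 + (0 : H →L[ℂ] H) w.ofLp.2 = A w.ofLp.1
    simp
  have h2 : (AA A w).ofLp.2 = A w.ofLp.2 := by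
    show (0 : H →L[ℂ] H) w.ofLp.1 + A w.ofLp.2 = A w.ofLp.2
    simp
  rw [h1, h2]

end Prod

theorem stmt10 {H : Type*} [NormedAddCommGroup H] [InnerProductSpace ℂ H] [CompleteSpace H]
    (A : H →L[ℂ] H) (hA : A.IsPositive)
    (P Q R S Ps Ss : H →L[ℂ] H)
    (hP : IsReducedAdjoint A P Ps) (hS : IsReducedAdjoint A S Ss)
    (hQ : ∃ Qs, IsReducedAdjoint A Q Qs) (hR : ∃ Rs, IsReducedAdjoint A R Rs) :
    wA (AA A) (blk P Q R S) ≤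
      Real.sqrt (2 * (wA A P) ^ 2 +
        (1 / 2) * (opNormA A (Ps ∘L Q) + (opNormA A Q) ^ 2)) +
      Real.sqrt (2 * (wA A S) ^ 2 +
        (1 / 2) * (opNormA A (Ss ∘L R) + (opNormA A R) ^ 2)) := by
  obtain ⟨Qs, hQ⟩ := hQ
  obtain ⟨Rs, hR⟩ := hR
  have hwP : 0 ≤ wA A P := wA_nonneg A P
  have hwS : 0 ≤ wA A S := wA_nonneg A S
  have hNQ : 0 ≤ opNormA A Q := opNormA_nonneg A Q
  have hNR : 0 ≤ opNormA A R := opNormA_nonneg A R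
  have hPQ : 0 ≤ opNormA A (Ps ∘L Q) := opNormA_nonneg A _
  have hSR : 0 ≤ opNormA A (Ss ∘L R) := opNormA_nonneg A _
  have h1 : wA A P + opNormA A Q / 2 ≤
      Real.sqrt (2 * (wA A P) ^ 2 + (1 / 2) * (opNormA A (Ps ∘L Q) + (opNormA A Q) ^ 2)) := by
    have hsq : (wA A P + opNormA A Q / 2) ^ 2
        ≤ 2 * (wA A P) ^ 2 + (1 / 2) * (opNormA A (Ps ∘L Q) + (opNormA A Q) ^ 2) := by
      nlinarith [sq_nonneg (wA A P - opNormA A Q / 2), hPQ]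
    have := Real.sqrt_le_sqrt hsq
    rwa [Real.sqrt_sq (by positivity)] at this
  have h2 : wA A S + opNormA A R / 2 ≤
      Real.sqrt (2 * (wA A S) ^ 2 + (1 / 2) * (opNormA A (Ss ∘L R) + (opNormA A R) ^ 2)) := by
    have hsq : (wA A S + opNormA A R / 2) ^ 2
        ≤ 2 * (wA A S) ^ 2 + (1 / 2) * (opNormA A (Ss ∘L R) + (opNormA A R) ^ 2) := by
      nlinarith [sq_nonneg (wA A S - opNormA A R / 2), hSR]
    have := Real.sqrt_le_sqrt hsq
    rwa [Real.sqrt_sq (by positivity)] at this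
  refine le_trans ?_ (add_le_add h1 h2)
  refine Real.sSup_le ?_ (by positivity)
  rintro c ⟨v, hv, rfl⟩
  have ha0 : 0 ≤ vnormA A v.ofLp.1 := vnormA_nonneg A v.ofLp.1
  have hb0 : 0 ≤ vnormA A v.ofLp.2 := vnormA_nonneg A v.ofLp.2
  have hxy : vnormA A v.ofLp.1 ^ 2 + vnormA A v.ofLp.2 ^ 2 = 1 := by
    have hsum : RCLike.re (inner ℂ (AA A v) v : ℂ)
        = RCLike.re (inner ℂ (A v.ofLp.1) v.ofLp.1 : ℂ) + RCLike.re (inner ℂ (A v.ofLp.2) v.ofLp.2 : ℂ) := by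
      rw [inner_AA_apply]
      simp
    have h0 : vnormA (AA A) v = 1 := hv
    unfold vnormA at h0
    rw [Real.sqrt_eq_one] at h0
    rw [vnormA_sq hA, vnormA_sq hA, ← hsum, h0]
  have hexp : (inner ℂ (AA A (blk P Q R S v)) v : ℂ)
      = inner ℂ (A (P v.ofLp.1)) v.ofLp.1 + inner ℂ (A (Q v.ofLp.2)) v.ofLp.1
        + inner ℂ (A (R v.ofLp.1)) v.ofLp.2 + inner ℂ (A (S v.ofLp.2)) v.ofLp.2 := by
    rw [inner_AA_apply, blk_fst, blk_snd, map_add, map_add, inner_add_left, inner_add_left]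
    ring
  have hb1 : ‖(inner ℂ (A (P v.ofLp.1)) v.ofLp.1 : ℂ)‖ ≤ wA A P * vnormA A v.ofLp.1 ^ 2 :=
    wAA_le hA hP v.ofLp.1
  have hb4 : ‖(inner ℂ (A (S v.ofLp.2)) v.ofLp.2 : ℂ)‖ ≤ wA A S * vnormA A v.ofLp.2 ^ 2 :=
    wAA_le hA hS v.ofLp.2
  have hb2 : ‖(inner ℂ (A (Q v.ofLp.2)) v.ofLp.1 : ℂ)‖
      ≤ (opNormA A Q * vnormA A v.ofLp.2) * vnormA A v.ofLp.1 :=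
    (csA hA (Q v.ofLp.2) v.ofLp.1).trans (mul_le_mul_of_nonneg_right (opA_le hA hQ v.ofLp.2) ha0)
  have hb3 : ‖(inner ℂ (A (R v.ofLp.1)) v.ofLp.2 : ℂ)‖
      ≤ (opNormA A R * vnormA A v.ofLp.1) * vnormA A v.ofLp.2 :=
    (csA hA (R v.ofLp.1) v.ofLp.2).trans (mul_le_mul_of_nonneg_right (opA_le hA hR v.ofLp.1) hb0)
  have habs : ‖(inner ℂ (AA A (blk P Q R S v)) v : ℂ)‖
      ≤ wA A P * vnormA A v.ofLp.1 ^ 2 + (opNormA A Q * vnormA A v.ofLp.2) * vnormA A v.ofLp.1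
        + (opNormA A R * vnormA A v.ofLp.1) * vnormA A v.ofLp.2 + wA A S * vnormA A v.ofLp.2 ^ 2 := by
    rw [hexp]
    have t1 : ‖(inner ℂ (A (P v.ofLp.1)) v.ofLp.1 + inner ℂ (A (Q v.ofLp.2)) v.ofLp.1
          + inner ℂ (A (R v.ofLp.1)) v.ofLp.2 + inner ℂ (A (S v.ofLp.2)) v.ofLp.2 : ℂ)‖
        ≤ ‖(inner ℂ (A (P v.ofLp.1)) v.ofLp.1 : ℂ)‖ + ‖(inner ℂ (A (Q v.ofLp.2)) v.ofLp.1 : ℂ)‖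
          + ‖(inner ℂ (A (R v.ofLp.1)) v.ofLp.2 : ℂ)‖ + ‖(inner ℂ (A (S v.ofLp.2)) v.ofLp.2 : ℂ)‖ := by
      refine le_trans (norm_add_le _ _) ?_
      refine add_le_add ?_ le_rfl
      refine le_trans (norm_add_le _ _) ?_
      exact add_le_add (norm_add_le _ _) le_rfl
    refine t1.trans ?_
    linarith [hb1, hb2, hb3, hb4]
  refine habs.trans ?_
  set a := vnormA A v.ofLp.1
  set b := vnormA A v.ofLp.2
  have key : wA A P * a ^ 2 + (opNormA A Q * b) * a + (opNormA A R * a) * b + wA A S * b ^ 2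
      ≤ (wA A P + opNormA A Q / 2) + (wA A S + opNormA A R / 2) := by
    nlinarith [mul_nonneg hwP (sq_nonneg b), mul_nonneg hwS (sq_nonneg a),
      mul_nonneg hNQ (sq_nonneg (a - b)), mul_nonneg hNR (sq_nonneg (a - b)),
      mul_le_mul_of_nonneg_left hxy.le hwP, mul_le_mul_of_nonneg_left hxy.ge hwP,
      mul_le_mul_of_nonneg_left hxy.le hwS, mul_le_mul_of_nonneg_left hxy.ge hwS,
      mul_le_mul_of_nonneg_left hxy.le hNQ, mul_le_mul_of_nonneg_left hxy.ge hNQ,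
      mul_le_mul_of_nonneg_left hxy.le hNR, mul_le_mul_of_nonneg_left hxy.ge hNR]
  exact key
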